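/- arXiv:0806.4341 — 5 statements merged into one kernel-verified Lean document; each statement's English description precedes it below -/
import Mathlib

section
/- Let u: {0,1}* → ℕ be a function satisfying: (1) u(x) ≥ u(y) whenever x ⊑ y; and (2) if x ⊑ y and u(x) > u(y), then u(x) > u(z) for all z with x ⊑ z and |z| = |y|. Then the function û(ω) = min{n : u(ω^i) = u(ω^n) for all i ≥ n} is defined for all infinite binary sequences ω, and there exists m such that u(x) = u(x^m) for all strings x with |x| ≥ m (where x^m denotes the length-m prefix). -/
private lemma stab_mono (u : List Bool → ℕ) (w : List Bool) (m m' : ℕ)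
    (hw : w.length ≤ m) (hmm : m ≤ m')
    (H : ∀ z, w <+: z → m ≤ z.length → u z = u (z.take m)) :
    ∀ z, w <+: z → m' ≤ z.length → u z = u (z.take m') := by
  intro z hz hlen
  have hpre : w <+: z.take m' := by
    obtain ⟨t, rfl⟩ := hz
    rw [List.take_append, List.take_of_length_le (hw.trans hmm)]
    exact ⟨_, rfl⟩
  have h1 := H z hz (hmm.trans hlen)
  have h2 := H (z.take m') hpre (by simp [hmm, hlen])
  rw [List.take_take, min_eq_left hmm] at h2
  rw [h1, ← h2]

private lemma key (u : List Bool → ℕ)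
    (hmono : ∀ x y : List Bool, x <+: y → u y ≤ u x)
    (hdrop : ∀ x y z : List Bool, x <+: y → u y < u x →
      x <+: z → z.length = y.length → u z < u x) :
    ∀ N (x : List Bool), u x ≤ N →
      ∃ m, x.length ≤ m ∧ ∀ z, x <+: z → m ≤ z.length → u z = u (z.take m) := by
  intro N
  induction N with
  | zero =>
    intro x hx
    refine ⟨x.length, le_rfl, fun z hz hlen => ?_⟩
    obtain ⟨t, rfl⟩ := hz
    rw [List.take_left]
    have h1 : u (x ++ t) ≤ 0 := (hmono x (x ++ t) ⟨_, rfl⟩).trans hx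
    omega
  | succ N ih =>
    intro x hx
    by_cases hconst : ∀ z, x <+: z → u z = u x
    · refine ⟨x.length, le_rfl, fun z hz hlen => ?_⟩
      obtain ⟨t, rfl⟩ := hz
      rw [List.take_left, hconst (x ++ t) ⟨_, rfl⟩]
    · push_neg at hconst
      obtain ⟨y, hxy, hne⟩ := hconst
      have hlt : u y < u x := lt_of_le_of_ne (hmono x y hxy) hne
      set L := y.length with hL
      have hxL : x.length ≤ L := hxy.length_le
      have hdropAll : ∀ z, x <+: z → z.length = L → u z < u x :=
        fun z h1 h2 => hdrop x y z hxy hlt h1 h2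
      have hIH : ∀ f : Fin (L - x.length) → Bool, ∃ m, (x ++ List.ofFn f).length ≤ m ∧
          ∀ z, (x ++ List.ofFn f) <+: z → m ≤ z.length → u z = u (z.take m) := by
        intro f
        apply ih
        have hlen : (x ++ List.ofFn f).length = L := by simp; omega
        have := hdropAll (x ++ List.ofFn f) ⟨_, rfl⟩ hlen
        omega
      choose M hM1 hM2 using hIH
      refine ⟨max L (Finset.univ.sup M), le_trans hxL (le_max_left _ _), ?_⟩
      set m := max L (Finset.univ.sup M) with hm
      intro z hz hlen
      have hLz : L ≤ z.length := le_trans (le_max_left _ _) hlen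
      set w := z.take L with hwdef
      have hwlen : w.length = L := by simp [hwdef, hLz]
      have hwz : w <+: z := List.take_prefix _ _
      have hxw : x <+: w := by
        obtain ⟨t, rfl⟩ := hz
        rw [hwdef, List.take_append, List.take_of_length_le hxL]
        exact ⟨_, rfl⟩
      obtain ⟨s, hs⟩ := hxw
      have hslen : s.length = L - x.length := by
        rw [← hs] at hwlen; simp at hwlen; omega
      have hf : ∃ f : Fin (L - x.length) → Bool, List.ofFn f = s := by
        refine ⟨fun i => s.get (Fin.cast hslen.symm i), ?_⟩
        apply List.ext_getElem
        · simp [hslen]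
        · intro i h1 h2
          simp [List.getElem_ofFn]
      obtain ⟨f, hfs⟩ := hf
      have hwf : x ++ List.ofFn f = w := by rw [hfs, hs]
      have hMm : M f ≤ m :=
        le_trans (Finset.le_sup (Finset.mem_univ f)) (le_max_right _ _)
      exact stab_mono u (x ++ List.ofFn f) (M f) m (hM1 f) hMm (hM2 f) z
        (by rw [hwf]; exact hwz) hlen

/-- If `u : {0,1}* → ℕ` is non-increasing along the prefix order and satisfies:
whenever `x ⊑ y` and `u x > u y`, then `u x > u z` for every `z ⊒ x` of the same
length as `y`; then `û(ω) = min{n : u(ω^i) = u(ω^n) for all i ≥ n}` is defined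
for every infinite sequence `ω`, and there is an `m` such that
`u x = u (x^m)` for all strings `x` of length `≥ m`. -/
theorem stmt5 (u : List Bool → ℕ)
    (hmono : ∀ x y : List Bool, x <+: y → u y ≤ u x)
    (hdrop : ∀ x y z : List Bool, x <+: y → u y < u x →
      x <+: z → z.length = y.length → u z < u x) :
    (∀ ω : ℕ → Bool, ∃ n : ℕ, ∀ i : ℕ, n ≤ i →
      u (List.ofFn (fun k : Fin i => ω k)) = u (List.ofFn (fun k : Fin n => ω k))) ∧
    (∃ m : ℕ, ∀ x : List Bool, m ≤ x.length → u x = u (x.take m)) := by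
  obtain ⟨m, -, hm⟩ := key u hmono hdrop (u []) [] le_rfl
  constructor
  · intro ω
    refine ⟨m, fun i hi => ?_⟩
    have h1 := hm (List.ofFn fun k : Fin i => ω k) List.nil_prefix (by simpa using hi)
    have h2 : (List.ofFn fun k : Fin i => ω k).take m = List.ofFn fun k : Fin m => ω k := by
      apply List.ext_getElem
      · simp [hi]
      · intro j h1' h2'
        simp [List.getElem_take, List.getElem_ofFn]
    rw [h1, h2]
  · exact ⟨m, fun x hx => hm x List.nil_prefix hx⟩
end

section
/- Let f: {0,1}* → [0,1] be total and define ω recursively by ω_i = 1 iff f(ω^{i−1}) < 1/2. For ν = 0 let I_0 be the indicator of [0,1/2) and for ν = 1 let I_1 be the indicator of [1/2,1]. Then for ν = 0, every term I_0(p_i)(ω_i − p_i) with p_i = f(ω^{i−1}) is nonnegative and equals at least 1/2 whenever I_0(p_i) = 1; symmetrically for ν = 1 each term I_1(p_i)(ω_i − p_i) ≤ −1/2 whenever I_1(p_i) = 1. Consequently, for at least one ν ∈ {0,1}, limsup_n |(1/n) Σ_{i=1}^n I_ν(p_i)(ω_i − p_i)| ≥ 1/4. -/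
open Filter

/-- indicator of the interval `[0, 1/2)` -/
noncomputable def I0 (p : ℝ) : ℝ := if 0 ≤ p ∧ p < 1/2 then 1 else 0

/-- indicator of the interval `[1/2, 1]` -/
noncomputable def I1 (p : ℝ) : ℝ := if 1/2 ≤ p ∧ p ≤ 1 then 1 else 0

/-- For Oakes' adversarial sequence against a total forecaster `f`, the checked
terms are one-sided and of size at least `1/2` whenever the corresponding rule
fires; consequently for at least one `ν ∈ {0,1}` the calibration error of the
rule `I_ν` has `limsup` at least `1/4`. -/
theorem stmt12 (f : List Bool → ℝ) (hf : ∀ x, 0 ≤ f x ∧ f x ≤ 1)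
    (ω : ℕ → Bool)
    (hω : ∀ i : ℕ, ω i = decide (f (List.ofFn (fun k : Fin i => ω k)) < 1/2))
    (p : ℕ → ℝ) (hp : ∀ i, p i = f (List.ofFn (fun k : Fin i => ω k)))
    (w : ℕ → ℝ) (hw : ∀ i, w i = if ω i then 1 else 0) :
    (∀ i, 0 ≤ I0 (p i) * (w i - p i)) ∧
    (∀ i, I0 (p i) = 1 → 1/2 ≤ I0 (p i) * (w i - p i)) ∧
    (∀ i, I1 (p i) = 1 → I1 (p i) * (w i - p i) ≤ -(1/2)) ∧
    ((1/4 : ℝ) ≤ limsup (fun n : ℕ =>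
        |(1 / (n : ℝ)) * ∑ i ∈ Finset.range n, I0 (p i) * (w i - p i)|) atTop ∨
     (1/4 : ℝ) ≤ limsup (fun n : ℕ =>
        |(1 / (n : ℝ)) * ∑ i ∈ Finset.range n, I1 (p i) * (w i - p i)|) atTop) := by
  have hpb : ∀ i, 0 ≤ p i ∧ p i ≤ 1 := fun i => (hp i) ▸ hf _
  have hwp : ∀ i, w i = if p i < 1/2 then 1 else 0 := by
    intro i
    rw [hw i, hω i, ← hp i]
    by_cases h : p i < 1/2 <;> simp [h]
  have key : ∀ i, (p i < 1/2 ∧ I0 (p i) = 1 ∧ I1 (p i) = 0 ∧ w i = 1) ∨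
      (1/2 ≤ p i ∧ I0 (p i) = 0 ∧ I1 (p i) = 1 ∧ w i = 0) := by
    intro i
    obtain ⟨h0, h1⟩ := hpb i
    by_cases h : p i < 1/2
    · exact Or.inl ⟨h, by unfold I0; rw [if_pos ⟨h0, h⟩],
        by unfold I1; rw [if_neg]; rintro ⟨hh, -⟩; linarith,
        by rw [hwp i, if_pos h]⟩
    · push_neg at h
      exact Or.inr ⟨h, by unfold I0; rw [if_neg]; rintro ⟨-, hh⟩; linarith,
        by unfold I1; rw [if_pos ⟨h, h1⟩],
        by rw [hwp i, if_neg (not_lt.mpr h)]⟩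
  -- term bounds
  have t0 : ∀ i, 1/2 * I0 (p i) ≤ I0 (p i) * (w i - p i) := by
    intro i
    rcases key i with ⟨h, e0, _, ew⟩ | ⟨h, e0, _, ew⟩ <;> rw [e0, ew] <;> ring_nf <;> linarith
  have t1 : ∀ i, I1 (p i) * (w i - p i) ≤ -(1/2) * I1 (p i) := by
    intro i
    rcases key i with ⟨h, _, e1, ew⟩ | ⟨h, _, e1, ew⟩ <;> rw [e1, ew] <;> ring_nf <;> linarith
  have hI0nn : ∀ i, 0 ≤ I0 (p i) := by
    intro i; unfold I0; split <;> norm_num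
  refine ⟨fun i => le_trans (by have := hI0nn i; linarith) (t0 i), ?_, ?_, ?_⟩
  · intro i h; have := t0 i; rw [h] at this ⊢; linarith
  · intro i h; have := t1 i; rw [h] at this ⊢; linarith
  -- main limsup claim
  set a : ℕ → ℝ := fun n => |(1 / (n : ℝ)) * ∑ i ∈ Finset.range n, I0 (p i) * (w i - p i)|
  set b : ℕ → ℝ := fun n => |(1 / (n : ℝ)) * ∑ i ∈ Finset.range n, I1 (p i) * (w i - p i)|
  have habs : ∀ i, |I0 (p i) * (w i - p i)| ≤ 1 ∧ |I1 (p i) * (w i - p i)| ≤ 1 := by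
    intro i
    obtain ⟨h0, h1⟩ := hpb i
    rcases key i with ⟨h, e0, e1, ew⟩ | ⟨h, e0, e1, ew⟩ <;> rw [e0, e1, ew] <;>
      constructor <;> rw [abs_le] <;> constructor <;> nlinarith
  have hbound : ∀ (g : ℕ → ℝ), (∀ i, |g i| ≤ 1) →
      ∀ n : ℕ, |(1 / (n : ℝ)) * ∑ i ∈ Finset.range n, g i| ≤ 1 := by
    intro g hg n
    rcases Nat.eq_zero_or_pos n with rfl | hn
    · simp
    · have hn' : (0:ℝ) < n := by exact_mod_cast hn
      rw [abs_mul]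
      calc |1/(n:ℝ)| * |∑ i ∈ Finset.range n, g i|
          ≤ (1/(n:ℝ)) * ∑ i ∈ Finset.range n, |g i| := by
            rw [abs_of_pos (by positivity)]
            exact mul_le_mul_of_nonneg_left (Finset.abs_sum_le_sum_abs _ _) (by positivity)
        _ ≤ (1/(n:ℝ)) * ∑ i ∈ Finset.range n, (1:ℝ) := by
            gcongr with i hi; exact hg i
        _ = 1 := by field_simp; simp
  have hmax : ∀ n : ℕ, 1 ≤ n → (1/4 ≤ a n ∨ 1/4 ≤ b n) := by
    intro n hn
    have hn' : (0:ℝ) < n := by exact_mod_cast hn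
    -- sum difference lower bound
    have hdiff : (n : ℝ) * (1/2) ≤
        (∑ i ∈ Finset.range n, I0 (p i) * (w i - p i)) -
        (∑ i ∈ Finset.range n, I1 (p i) * (w i - p i)) := by
      rw [← Finset.sum_sub_distrib]
      calc (n : ℝ) * (1/2) = ∑ _i ∈ Finset.range n, (1/2 : ℝ) := by
            rw [Finset.sum_const, Finset.card_range]; ring
        _ ≤ _ := by
            apply Finset.sum_le_sum
            intro i _
            have h0 := t0 i
            have h1 := t1 i
            rcases key i with ⟨_, e0, e1, _⟩ | ⟨_, e0, e1, _⟩ <;>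
              rw [e0, e1] at * <;> linarith
    by_contra hcon
    push_neg at hcon
    obtain ⟨ha, hb⟩ := hcon
    have ha' : |∑ i ∈ Finset.range n, I0 (p i) * (w i - p i)| < (n:ℝ) * (1/4) := by
      have : a n = (1/(n:ℝ)) * |∑ i ∈ Finset.range n, I0 (p i) * (w i - p i)| := by
        simp only [a, abs_mul, abs_of_pos (show (0:ℝ) < 1/(n:ℝ) by positivity)]
      rw [this] at ha
      calc |∑ i ∈ Finset.range n, I0 (p i) * (w i - p i)|
          = (n:ℝ) * ((1/(n:ℝ)) * |∑ i ∈ Finset.range n, I0 (p i) * (w i - p i)|) := by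
            field_simp
        _ < (n:ℝ) * (1/4) := by exact mul_lt_mul_of_pos_left ha hn'
    have hb' : |∑ i ∈ Finset.range n, I1 (p i) * (w i - p i)| < (n:ℝ) * (1/4) := by
      have : b n = (1/(n:ℝ)) * |∑ i ∈ Finset.range n, I1 (p i) * (w i - p i)| := by
        simp only [b, abs_mul, abs_of_pos (show (0:ℝ) < 1/(n:ℝ) by positivity)]
      rw [this] at hb
      calc |∑ i ∈ Finset.range n, I1 (p i) * (w i - p i)|
          = (n:ℝ) * ((1/(n:ℝ)) * |∑ i ∈ Finset.range n, I1 (p i) * (w i - p i)|) := by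
            field_simp
        _ < (n:ℝ) * (1/4) := by exact mul_lt_mul_of_pos_left hb hn'
    have h1 := abs_lt.mp ha'
    have h2 := abs_lt.mp hb'
    linarith [h1.2, h2.1, hdiff]
  have hfreq : (∃ᶠ n in atTop, (1/4 : ℝ) ≤ a n) ∨ (∃ᶠ n in atTop, (1/4 : ℝ) ≤ b n) := by
    rw [← frequently_or_distrib]
    exact (eventually_atTop.mpr ⟨1, hmax⟩).frequently
  have hba : IsBoundedUnder (· ≤ ·) atTop a :=
    ⟨1, eventually_map.mpr (Eventually.of_forall
      (hbound _ (fun i => (habs i).1)))⟩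
  have hbb : IsBoundedUnder (· ≤ ·) atTop b :=
    ⟨1, eventually_map.mpr (Eventually.of_forall
      (hbound _ (fun i => (habs i).2)))⟩
  rcases hfreq with h | h
  · exact Or.inl (le_limsup_of_frequently_le h hba)
  · exact Or.inr (le_limsup_of_frequently_le h hbb)
end

section
/- Let q be a network on the infinite binary tree with flow R defined by R(λ)=1, R(y) = Σ_{σ: σ₂=y} q(σ)R(σ₁), where for unit edges q(x,xb) = (1−d(x))/2 and q(σ) = d(σ₁) for extra edges σ ∈ G. Suppose the extra edges in G have pairwise distinct terminal-vertex lengths at each level and satisfy: for σ ∈ G with |σ₂| = n, d(u) = d(σ₁)/(1 − d(σ₁)) for all u with P(u,σ) (i.e., |u| = n, σ₁ ⊑ u, u ≠ σ₂) and d(u)=0 otherwise at level n. Then Σ_{u: P(u,σ)} R(u) ≤ R(σ₁) − d(σ₁)R(σ₁) = (1 − d(σ₁))R(σ₁) for every σ ∈ G with |σ₂| = n. -/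
/-- Key flow estimate of Lemma 5: for an extra edge `σ ∈ G` with `|σ₂| = n`,
the total flow reaching the level-`n` descendants of `σ₁` other than `σ₂` is at
most `(1 − d(σ₁))·R(σ₁)`. -/
theorem stmt13 (d : List Bool → ℝ) (R : List Bool → ℝ)
    (G : Finset (List Bool × List Bool))
    (hd : ∀ x, 0 ≤ d x ∧ d x ≤ 1)
    (hR : ∀ x, 0 ≤ R x)
    (hroot : R [] = 1)
    (hrec : ∀ y : List Bool, y ≠ [] →
      R y = (1 - d y.dropLast) / 2 * R y.dropLast +
        ∑ σ ∈ G.filter (fun σ => σ.2 = y), d σ.1 * R σ.1)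
    (σ : List Bool × List Bool) (hσ : σ ∈ G) (n : ℕ)
    (hn : σ.2.length = n) (hpre : σ.1 <+: σ.2) (hlt : σ.1.length < n)
    (hdistinct : ∀ τ ∈ G, τ ≠ σ → σ.1 <+: τ.2 → τ.2.length ≤ n → False)
    (hdelay : ∀ u : List Bool, u.length = n → σ.1 <+: u → u ≠ σ.2 →
      d u = d σ.1 / (1 - d σ.1)) :
    (∑ v : Fin n → Bool,
        if σ.1 <+: List.ofFn v ∧ List.ofFn v ≠ σ.2 then R (List.ofFn v) else 0)
      ≤ (1 - d σ.1) * R σ.1 := by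
  obtain ⟨a, b⟩ := σ
  simp only at hn hpre hlt hdistinct hdelay ⊢
  subst hn
  set T : ℕ → ℝ := fun k =>
    ∑ v : Fin k → Bool, if a <+: List.ofFn v then R (List.ofFn v) else 0 with hT_def
  -- the only extra edge arriving in the subtree at levels ≤ |b| is (a,b) itself
  have hfil : ∀ l : List Bool, a <+: l → l.length ≤ b.length →
      (∑ τ ∈ G.filter (fun τ => τ.2 = l), d τ.1 * R τ.1)
        = if l = b then d a * R a else 0 := by
    intro l hal hlen
    by_cases hlb : l = b
    · subst hlb
      have : G.filter (fun τ => τ.2 = l) = {(a, l)} := by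
        ext τ
        simp only [Finset.mem_filter, Finset.mem_singleton]
        constructor
        · rintro ⟨hτG, hτ2⟩
          by_contra hne
          exact hdistinct τ hτG hne (hτ2 ▸ hal) (by rw [hτ2])
        · rintro rfl
          exact ⟨hσ, rfl⟩
      rw [this, Finset.sum_singleton, if_pos rfl]
    · rw [if_neg hlb]
      apply Finset.sum_eq_zero
      intro τ hτ
      simp only [Finset.mem_filter] at hτ
      exfalso
      have hne : τ ≠ (a, b) := by
        intro h; apply hlb; rw [← hτ.2, h]
      exact hdistinct τ hτ.1 hne (hτ.2 ▸ hal) (by rw [hτ.2]; exact hlen)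
  -- sum of an "ofFn v = c" indicator sum
  have hone : ∀ (k : ℕ) (c : List Bool) (g : List Bool → ℝ),
      (∑ v : Fin k → Bool, if List.ofFn v = c then g (List.ofFn v) else 0)
        = if k = c.length then g c else 0 := by
    intro k c g
    by_cases hk : k = c.length
    · subst hk
      rw [if_pos rfl]
      rw [Fintype.sum_eq_single (fun i : Fin c.length => c.get i)]
      · rw [List.ofFn_get, if_pos rfl]
      · intro v hv
        rw [if_neg]
        intro h
        exact hv (List.ofFn_injective (by rw [h, List.ofFn_get]))
    · rw [if_neg hk]
      apply Finset.sum_eq_zero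
      intro v _
      rw [if_neg]
      intro h
      apply hk
      rw [← h, List.length_ofFn]
  -- transition between levels
  have hstep : ∀ k : ℕ, a.length ≤ k → k < b.length →
      T (k + 1) = (∑ w : Fin k → Bool,
          if a <+: List.ofFn w then (1 - d (List.ofFn w)) * R (List.ofFn w) else 0)
        + (if k + 1 = b.length then d a * R a else 0) := by
    intro k hk1 hk2
    have hofn : ∀ (w : Fin k → Bool) (bit : Bool),
        List.ofFn (Fin.snoc w bit : Fin (k+1) → Bool) = List.ofFn w ++ [bit] := by
      intro w bit
      rw [List.ofFn_succ']
      simp [Fin.snoc_castSucc, List.concat_eq_append]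
    have split : ∀ v : Fin (k+1) → Bool,
        (if a <+: List.ofFn v then R (List.ofFn v) else 0)
        = (if a <+: List.ofFn v then
            (1 - d (List.ofFn v).dropLast) / 2 * R (List.ofFn v).dropLast else 0)
          + (if List.ofFn v = b then d a * R a else 0) := by
      intro v
      by_cases hav : a <+: List.ofFn v
      · rw [if_pos hav, if_pos hav]
        have hne : List.ofFn v ≠ [] := by
          intro h
          have h2 := congrArg List.length h
          simp only [List.length_ofFn, List.length_nil] at h2
          omega
        rw [hrec _ hne, hfil _ hav (by simp only [List.length_ofFn]; omega)]
      · rw [if_neg hav, if_neg hav]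
        rw [if_neg]
        · ring
        · intro h
          exact hav (h ▸ hpre)
    calc T (k+1) = (∑ v : Fin (k+1) → Bool,
            if a <+: List.ofFn v then
              (1 - d (List.ofFn v).dropLast) / 2 * R (List.ofFn v).dropLast else 0)
          + (∑ v : Fin (k+1) → Bool, if List.ofFn v = b then d a * R a else 0) := by
          rw [hT_def, ← Finset.sum_add_distrib]
          exact Finset.sum_congr rfl fun v _ => split v
      _ = (∑ w : Fin k → Bool,
            if a <+: List.ofFn w then (1 - d (List.ofFn w)) * R (List.ofFn w) else 0)
          + (if k + 1 = b.length then d a * R a else 0) := by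
          congr 1
          · rw [← Equiv.sum_comp (Fin.snocEquiv (fun _ : Fin (k+1) => Bool)),
              Fintype.sum_prod_type]
            have : ∀ (bit : Bool) (w : Fin k → Bool),
                (if a <+: List.ofFn ((Fin.snocEquiv (fun _ : Fin (k+1) => Bool)) (bit, w)) then
                  (1 - d (List.ofFn ((Fin.snocEquiv (fun _ : Fin (k+1) => Bool)) (bit, w))).dropLast)
                    / 2 * R (List.ofFn ((Fin.snocEquiv (fun _ : Fin (k+1) => Bool)) (bit, w))).dropLast
                  else 0)
                = (if a <+: List.ofFn w then
                    (1 - d (List.ofFn w)) / 2 * R (List.ofFn w) else 0) := by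
              intro bit w
              have he : (Fin.snocEquiv (fun _ : Fin (k+1) => Bool)) (bit, w)
                  = (Fin.snoc w bit : Fin (k+1) → Bool) := rfl
              rw [he, hofn, List.dropLast_concat]
              congr 1
              · ext
                constructor
                · intro h
                  exact List.prefix_of_prefix_length_le h (List.prefix_append _ _)
                    (by simp; omega)
                · intro h
                  exact h.trans (List.prefix_append _ _)
            simp_rw [this]
            rw [Fintype.sum_bool]
            rw [← Finset.sum_add_distrib]
            apply Finset.sum_congr rfl
            intro w _
            by_cases haw : a <+: List.ofFn w
            · simp only [if_pos haw]; ring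
            · simp only [if_neg haw]; ring
          · exact hone (k+1) b (fun _ => d a * R a)
  -- main induction
  have hTbound : ∀ k : ℕ, a.length + 1 ≤ k → k ≤ b.length →
      T k ≤ (1 - d a) * R a + (if k = b.length then d a * R a else 0) := by
    intro k
    induction k with
    | zero => omega
    | succ k ih =>
      intro h1 h2
      rcases eq_or_lt_of_le (Nat.le_of_succ_le_succ h1) with hk | hk
      · -- base level: k = a.length
        rw [hstep k (le_of_eq hk) (by omega)]
        have : (∑ w : Fin k → Bool,
            if a <+: List.ofFn w then (1 - d (List.ofFn w)) * R (List.ofFn w) else 0)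
            = (1 - d a) * R a := by
          have : ∀ w : Fin k → Bool,
              (if a <+: List.ofFn w then (1 - d (List.ofFn w)) * R (List.ofFn w) else 0)
              = (if List.ofFn w = a then (1 - d (List.ofFn w)) * R (List.ofFn w) else 0) := by
            intro w
            congr 1
            ext
            constructor
            · intro h
              exact (h.eq_of_length (by simp [hk])).symm
            · intro h
              exact h ▸ List.prefix_refl _
          simp_rw [this]
          rw [hone k a (fun l => (1 - d l) * R l), if_pos hk.symm]
        rw [this]
      · -- inductive step
        have hb := hstep k (by omega) (by omega)
        have hmono : (∑ w : Fin k → Bool,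
            if a <+: List.ofFn w then (1 - d (List.ofFn w)) * R (List.ofFn w) else 0)
            ≤ T k := by
          apply Finset.sum_le_sum
          intro w _
          by_cases haw : a <+: List.ofFn w
          · rw [if_pos haw, if_pos haw]
            nlinarith [hd (List.ofFn w), hR (List.ofFn w)]
          · rw [if_neg haw, if_neg haw]
        have hih := ih (by omega) (by omega)
        rw [if_neg (by omega : ¬ k = b.length)] at hih
        rw [hb]
        linarith [hmono, hih]
  -- conclude
  have hfin := hTbound b.length (by omega) le_rfl
  rw [if_pos rfl] at hfin
  have hsplit : T b.length
      = (∑ v : Fin b.length → Bool,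
          if a <+: List.ofFn v ∧ List.ofFn v ≠ b then R (List.ofFn v) else 0)
        + (∑ v : Fin b.length → Bool,
          if List.ofFn v = b then (if a <+: List.ofFn v then R (List.ofFn v) else 0) else 0) := by
    rw [hT_def, ← Finset.sum_add_distrib]
    apply Finset.sum_congr rfl
    intro v _
    by_cases hvb : List.ofFn v = b <;> by_cases hav : a <+: List.ofFn v <;>
      simp [hvb, hav]
  rw [hone b.length b (fun l => if a <+: l then R l else 0), if_pos rfl, if_pos hpre] at hsplit
  -- R b ≥ d a * R a
  have hRb : d a * R a ≤ R b := by
    have hbne : b ≠ [] := by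
      intro h; rw [h] at hlt; simp at hlt
    rw [hrec b hbne, hfil b hpre le_rfl, if_pos rfl]
    have h1 := (hd b.dropLast).2
    have h2 := hR b.dropLast
    nlinarith
  linarith [hfin, hsplit]
end

section
/- Let Q be a semimeasure obtained as a q-flow, with the property (from the construction) that whenever an extra edge (x,z) ∈ G is mounted, d(z^n) < 1 for all n < |z| along z (extra edges are never mounted across vertices with delay 1). Then Q(y) = 0 if and only if there exists an edge of unit length (y^n, y^{n+1}) with n < |y| and q(y^n, y^{n+1}) = 0 (equivalently, d(y^n) = 1). -/
/-- If all delays along `y` are strictly less than `1`, then `R y > 0`. -/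
lemma auxA14 (d R : List Bool → ℝ)
    (G : Finset (List Bool × List Bool))
    (hd : ∀ x, 0 ≤ d x ∧ d x ≤ 1)
    (hR : ∀ x, 0 ≤ R x)
    (hroot : R [] = 1)
    (hrec : ∀ y : List Bool, y ≠ [] →
      R y = (1 - d y.dropLast) / 2 * R y.dropLast +
        ∑ σ ∈ G.filter (fun σ => σ.2 = y), d σ.1 * R σ.1) :
    ∀ y : List Bool, (∀ n, n < y.length → d (y.take n) < 1) → 0 < R y := by
  intro y
  induction y using List.reverseRecOn with
  | nil => intro _; rw [hroot]; norm_num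
  | append_singleton xs b ih =>
    intro h
    have hne : xs ++ [b] ≠ [] := by simp
    have hxs : ∀ n, n < xs.length → d (xs.take n) < 1 := by
      intro n hn
      have := h n (by simp; omega)
      rwa [List.take_append_of_le_length (le_of_lt hn)] at this
    have hdxs : d xs < 1 := by
      have := h xs.length (by simp)
      rwa [List.take_left] at this
    have hRxs : 0 < R xs := ih hxs
    rw [hrec _ hne, List.dropLast_concat]
    have hsum : 0 ≤ ∑ σ ∈ G.filter (fun σ => σ.2 = xs ++ [b]), d σ.1 * R σ.1 :=
      Finset.sum_nonneg fun σ _ => mul_nonneg (hd σ.1).1 (hR σ.1)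
    nlinarith

/-- If `d (y.take n) = 1` then `R` vanishes on every extension of `y.take (n+1)`. -/
lemma auxB14 (d R : List Bool → ℝ)
    (G : Finset (List Bool × List Bool))
    (hrec : ∀ y : List Bool, y ≠ [] →
      R y = (1 - d y.dropLast) / 2 * R y.dropLast +
        ∑ σ ∈ G.filter (fun σ => σ.2 = y), d σ.1 * R σ.1)
    (hmount : ∀ σ ∈ G, ∀ k : ℕ, k < σ.2.length → d (σ.2.take k) < 1)
    (y : List Bool) (n : ℕ) (hn : n < y.length) (hdn : d (y.take n) = 1) :
    ∀ x : List Bool, y.take (n + 1) <+: x → R x = 0 := by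
  have hwlen : (y.take (n + 1)).length = n + 1 := by
    rw [List.length_take]; omega
  suffices H : ∀ m : ℕ, ∀ x : List Bool, x.length = m →
      y.take (n + 1) <+: x → R x = 0 by
    intro x hx; exact H x.length x rfl hx
  intro m
  induction m using Nat.strong_induction_on with
  | _ m ih =>
    intro x hlen hpre
    have hxlen : n + 1 ≤ x.length := by
      have := hpre.length_le; omega
    have hxne : x ≠ [] := by
      intro h; rw [h] at hxlen; simp at hxlen
    have htn : x.take n = y.take n := by
      obtain ⟨t, rfl⟩ := hpre
      rw [List.take_append_of_le_length (by omega), List.take_take]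
      congr 1; omega
    have hsum : ∑ σ ∈ G.filter (fun σ => σ.2 = x), d σ.1 * R σ.1 = 0 := by
      apply Finset.sum_eq_zero
      intro σ hσ
      rw [Finset.mem_filter] at hσ
      have := hmount σ hσ.1 n (by rw [hσ.2]; omega)
      rw [hσ.2, htn, hdn] at this
      exact absurd this (lt_irrefl 1)
    have hfirst : (1 - d x.dropLast) / 2 * R x.dropLast = 0 := by
      rcases eq_or_lt_of_le hxlen with heq | hlt
      · -- x = y.take (n+1)
        have hdl : x.dropLast = y.take n := by
          rw [List.dropLast_eq_take]
          have h1 : x.length - 1 = n := by omega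
          rw [h1, htn]
        rw [hdl, hdn]; ring
      · -- strict extension
        have hpre' : y.take (n + 1) <+: x.dropLast := by
          rw [List.dropLast_eq_take, List.prefix_take_iff]
          exact ⟨hpre, by omega⟩
        have hlen' : x.dropLast.length = x.length - 1 := by
          simp [List.length_dropLast]
        have := ih (x.length - 1) (by omega) x.dropLast hlen' hpre'
        rw [this]; ring
    rw [hrec x hxne, hsum, hfirst, add_zero]

/-- Lemma 4: for the `q`-flow `Q` (the minimal semimeasure dominating `R`),
`Q(y) = 0` iff some unit-length edge along `y` has weight `0`,
i.e. iff `d(y^n) = 1` for some `n < |y|`; under the construction's property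
that extra edges are never mounted across vertices with delay `1`. -/
theorem stmt14 (d : List Bool → ℝ) (R : List Bool → ℝ)
    (G : Finset (List Bool × List Bool))
    (hd : ∀ x, 0 ≤ d x ∧ d x ≤ 1)
    (hR : ∀ x, 0 ≤ R x)
    (hroot : R [] = 1)
    (hrec : ∀ y : List Bool, y ≠ [] →
      R y = (1 - d y.dropLast) / 2 * R y.dropLast +
        ∑ σ ∈ G.filter (fun σ => σ.2 = y), d σ.1 * R σ.1)
    (hmount : ∀ σ ∈ G, ∀ k : ℕ, k < σ.2.length → d (σ.2.take k) < 1)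
    (Q : List Bool → ℝ)
    (hQsemi : Q [] ≤ 1 ∧ (∀ x, 0 ≤ Q x) ∧
      ∀ x, Q (x ++ [false]) + Q (x ++ [true]) ≤ Q x)
    (hQdom : ∀ x, R x ≤ Q x)
    (hQmin : ∀ Q' : List Bool → ℝ,
      (Q' [] ≤ 1 ∧ (∀ x, 0 ≤ Q' x) ∧
        ∀ x, Q' (x ++ [false]) + Q' (x ++ [true]) ≤ Q' x) →
      (∀ x, R x ≤ Q' x) → ∀ x, Q x ≤ Q' x) :
    ∀ y : List Bool, (Q y = 0 ↔ ∃ n : ℕ, n < y.length ∧ d (y.take n) = 1) := by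
  intro y
  constructor
  · intro hQ0
    by_contra hcon
    push_neg at hcon
    have hlt : ∀ n, n < y.length → d (y.take n) < 1 := fun n hn =>
      lt_of_le_of_ne (hd _).2 (hcon n hn)
    have hpos := auxA14 d R G hd hR hroot hrec y hlt
    have := hQdom y
    linarith
  · rintro ⟨n, hn, hdn⟩
    classical
    set w := y.take (n + 1) with hw
    have hwlen : w.length = n + 1 := by rw [hw, List.length_take]; omega
    have hRz := auxB14 d R G hrec hmount y n hn hdn
    set Q' : List Bool → ℝ := fun x => if w <+: x then 0 else Q x with hQ'
    have hQ'semi : Q' [] ≤ 1 ∧ (∀ x, 0 ≤ Q' x) ∧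
        ∀ x, Q' (x ++ [false]) + Q' (x ++ [true]) ≤ Q' x := by
      refine ⟨?_, ?_, ?_⟩
      · simp only [hQ']
        rw [if_neg]
        · exact hQsemi.1
        · intro h
          have := List.prefix_nil.mp h
          rw [this] at hwlen; simp at hwlen
      · intro x
        simp only [hQ']
        by_cases hx : w <+: x
        · rw [if_pos hx]
        · rw [if_neg hx]; exact hQsemi.2.1 x
      · intro x
        by_cases hx : w <+: x
        · have h0 : ∀ b : Bool, w <+: x ++ [b] := fun b =>
            hx.trans (List.prefix_append x [b])
          simp only [hQ', if_pos hx, if_pos (h0 false), if_pos (h0 true)]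
          norm_num
        · have hb : ∀ b : Bool,
              (if w <+: x ++ [b] then (0:ℝ) else Q (x ++ [b])) ≤ Q (x ++ [b]) := by
            intro b
            by_cases hxb : w <+: x ++ [b]
            · rw [if_pos hxb]; exact hQsemi.2.1 _
            · rw [if_neg hxb]
          simp only [hQ', if_neg hx]
          calc (if w <+: x ++ [false] then (0:ℝ) else Q (x ++ [false])) +
                (if w <+: x ++ [true] then (0:ℝ) else Q (x ++ [true]))
              ≤ Q (x ++ [false]) + Q (x ++ [true]) := add_le_add (hb false) (hb true)
            _ ≤ Q x := hQsemi.2.2 x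
    have hQ'dom : ∀ x, R x ≤ Q' x := by
      intro x
      simp only [hQ']
      by_cases hx : w <+: x
      · rw [if_pos hx]; exact le_of_eq (hRz x hx)
      · rw [if_neg hx]; exact hQdom x
    have hle := hQmin Q' hQ'semi hQ'dom y
    have hQ'y : Q' y = 0 := by
      simp only [hQ']
      rw [if_pos (List.take_prefix (n + 1) y)]
    have := hQsemi.2.1 y
    linarith
end

section
/- Let f: {0,1}* → [0,1] be partial with rational approximations φ_κ satisfying φ_κ(x) ≤ f(x) ≤ φ_κ(x) + κ whenever defined. Fix κ ∈ (0,1/2), a string x on which φ_κ is defined, and define the 'hardly predictable' continuation bit b(x) = 0 if φ_κ(x) ≥ 1/2 and b(x) = 1 otherwise. Then for any random variable p with Pr{p < 1/2} = f(x): if b(x) = 1 then E[1_{p < 1/2}·(b(x) − p)] ≥ (1/2)·(1/2 − κ), and if b(x) = 0 then E[1_{p ≥ 1/2}·(b(x) − p)] ≤ −(1/2)·(1/2 − κ). -/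
open MeasureTheory

/-- If `φ ≤ f(x) = Pr{p < 1/2} ≤ φ + κ`, then: when `φ ≥ 1/2` the forecast is
below `1/2` with probability at least `1/2`, and the hardly-predictable bit
`1` gives `E[1_{p<1/2}(1 − p)] ≥ (1/2)·Pr{p < 1/2} ≥ 1/4`; when `φ < 1/2`,
`Pr{p ≥ 1/2} ≥ 1/2 − κ` and `E[1_{p≥1/2}(0 − p)] ≤ −(1/2)(1/2 − κ)`. -/
theorem stmt19 {Ω : Type*} [MeasurableSpace Ω] (μ : Measure Ω)
    [IsProbabilityMeasure μ]
    (p : Ω → ℝ) (hpmeas : Measurable p) (hp01 : ∀ ω, 0 ≤ p ω ∧ p ω ≤ 1)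
    (fx φ κ : ℝ) (hκ : 0 < κ ∧ κ < 1/2)
    (hfx : fx = (μ {ω | p ω < 1/2}).toReal)
    (happrox : φ ≤ fx ∧ fx ≤ φ + κ) :
    ((1/2 : ℝ) ≤ φ →
      (1/2 : ℝ) ≤ (μ {ω | p ω < 1/2}).toReal ∧
      (1/2 : ℝ) * (μ {ω | p ω < 1/2}).toReal ≤
        ∫ ω, (if p ω < 1/2 then (1 : ℝ) else 0) * (1 - p ω) ∂μ ∧
      (1/4 : ℝ) ≤ ∫ ω, (if p ω < 1/2 then (1 : ℝ) else 0) * (1 - p ω) ∂μ) ∧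
    (φ < 1/2 →
      (1/2 - κ : ℝ) ≤ (μ {ω | 1/2 ≤ p ω}).toReal ∧
      ∫ ω, (if 1/2 ≤ p ω then (1 : ℝ) else 0) * (0 - p ω) ∂μ ≤
        -((1/2) * (1/2 - κ))) := by
  set s := {ω | p ω < 1/2} with hs
  set t := {ω | 1/2 ≤ p ω} with ht
  have hsm : MeasurableSet s := measurableSet_lt hpmeas measurable_const
  have htm : MeasurableSet t := measurableSet_le measurable_const hpmeas
  have hts : t = sᶜ := by
    ext ω; simp [hs, ht, not_lt]
  -- integrability of p
  have hpint : Integrable p μ := by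
    refine Integrable.mono' (integrable_const 1) hpmeas.aestronglyMeasurable ?_
    filter_upwards with ω
    rw [Real.norm_eq_abs, abs_le]
    exact ⟨by linarith [(hp01 ω).1], (hp01 ω).2⟩
  have hF1 : Integrable (fun ω => (if p ω < 1/2 then (1 : ℝ) else 0) * (1 - p ω)) μ := by
    have : (fun ω => (if p ω < 1/2 then (1 : ℝ) else 0) * (1 - p ω))
        = s.indicator (fun ω => 1 - p ω) := by
      ext ω; simp only [Set.indicator, hs, Set.mem_setOf_eq]; split_ifs <;> ring
    rw [this]
    exact ((integrable_const 1).sub hpint).indicator hsm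
  have hF2 : Integrable (fun ω => (if 1/2 ≤ p ω then (1 : ℝ) else 0) * (0 - p ω)) μ := by
    have : (fun ω => (if 1/2 ≤ p ω then (1 : ℝ) else 0) * (0 - p ω))
        = t.indicator (fun ω => 0 - p ω) := by
      ext ω; simp only [Set.indicator, ht, Set.mem_setOf_eq]; split_ifs <;> ring
    rw [this]
    exact ((integrable_const 0).sub hpint).indicator htm
  have hμs1 : μ s ≤ 1 := prob_le_one
  have hμt : (μ t).toReal = 1 - fx := by
    rw [hts, measure_compl hsm (measure_ne_top μ s), measure_univ, hfx,
      ENNReal.toReal_sub_of_le hμs1 ENNReal.one_ne_top]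
    simp
  constructor
  · intro hφ
    have h1 : (1/2 : ℝ) ≤ (μ s).toReal := by rw [← hfx]; linarith [happrox.1]
    refine ⟨h1, ?_, ?_⟩
    · have heq : (1/2 : ℝ) * (μ s).toReal = ∫ ω, s.indicator (fun _ => (1/2 : ℝ)) ω ∂μ := by
        rw [integral_indicator_const _ hsm]
        simp [mul_comm]
        rfl
      rw [heq]
      refine integral_mono (((integrable_const _)).indicator hsm) hF1 ?_
      intro ω
      simp only [Set.indicator, hs, Set.mem_setOf_eq]
      split_ifs with h
      · linarith
      · simp
    · have heq : (1/2 : ℝ) * (μ s).toReal = ∫ ω, s.indicator (fun _ => (1/2 : ℝ)) ω ∂μ := by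
        rw [integral_indicator_const _ hsm]
        simp [mul_comm]
        rfl
      have hle : (1/2 : ℝ) * (μ s).toReal ≤ ∫ ω, (if p ω < 1/2 then (1 : ℝ) else 0) * (1 - p ω) ∂μ := by
        rw [heq]
        refine integral_mono (((integrable_const _)).indicator hsm) hF1 ?_
        intro ω
        simp only [Set.indicator, hs, Set.mem_setOf_eq]
        split_ifs with h
        · linarith
        · simp
      nlinarith
  · intro hφ
    have h2 : (1/2 - κ : ℝ) ≤ (μ t).toReal := by
      rw [hμt]; linarith [happrox.2]
    refine ⟨h2, ?_⟩
    have hle : ∫ ω, (if 1/2 ≤ p ω then (1 : ℝ) else 0) * (0 - p ω) ∂μ ≤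
        ∫ ω, t.indicator (fun _ => (-(1/2) : ℝ)) ω ∂μ := by
      refine integral_mono hF2 ((integrable_const _).indicator htm) ?_
      intro ω
      simp only [Set.indicator, ht, Set.mem_setOf_eq]
      split_ifs with h
      · linarith
      · simp
    have heq : ∫ ω, t.indicator (fun _ => (-(1/2) : ℝ)) ω ∂μ = -(1/2) * (μ t).toReal := by
      rw [integral_indicator_const _ htm]
      simp [mul_comm]
      rfl
    rw [heq] at hle
    nlinarith
end
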